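/- Let σ be a finitely supported permutation of ℕ with σ ≠ 1, and let ν(σ) denote the cardinality of its support. Then there exists a positive integer k with k ≤ ν(σ) such that σ is a product of three permutations of ℕ, each conjugate to ι_k. -/

import Mathlib

namespace IotaAux

open Equiv List

/-- The list of all points mentioned in a list of pairs. -/
def pts (L : List (ℕ × ℕ)) : List ℕ := L.map Prod.fst ++ L.map Prod.snd

/-- The product of the swaps determined by a list of pairs. -/
def pperm (L : List (ℕ × ℕ)) : Equiv.Perm ℕ := (L.map fun p => Equiv.swap p.1 p.2).prod

lemma pts_length (L : List (ℕ × ℕ)) : (pts L).length = L.length + L.length := by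
  simp [pts]

lemma pperm_nil : pperm [] = 1 := rfl

lemma pperm_cons (p : ℕ × ℕ) (T : List (ℕ × ℕ)) :
    pperm (p :: T) = Equiv.swap p.1 p.2 * pperm T := by
  simp [pperm]

lemma pperm_append (A B : List (ℕ × ℕ)) : pperm (A ++ B) = pperm A * pperm B := by
  simp [pperm]

lemma mem_pts_fst {L : List (ℕ × ℕ)} {p : ℕ × ℕ} (hp : p ∈ L) : p.1 ∈ pts L := by
  simp only [pts, mem_append, mem_map]
  exact Or.inl ⟨p, hp, rfl⟩

lemma mem_pts_snd {L : List (ℕ × ℕ)} {p : ℕ × ℕ} (hp : p ∈ L) : p.2 ∈ pts L := by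
  simp only [pts, mem_append, mem_map]
  exact Or.inr ⟨p, hp, rfl⟩

lemma exists_of_mem_pts {L : List (ℕ × ℕ)} {x : ℕ} (hx : x ∈ pts L) :
    ∃ p ∈ L, x = p.1 ∨ x = p.2 := by
  simp only [pts, mem_append, mem_map] at hx
  rcases hx with ⟨p, hp, rfl⟩ | ⟨p, hp, rfl⟩
  · exact ⟨p, hp, Or.inl rfl⟩
  · exact ⟨p, hp, Or.inr rfl⟩

lemma pperm_apply_of_not_mem (L : List (ℕ × ℕ)) {y : ℕ} (h : y ∉ pts L) :
    pperm L y = y := by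
  induction L with
  | nil => rfl
  | cons p T ih =>
    have h1 : y ≠ p.1 := fun hy => h (hy ▸ mem_pts_fst (mem_cons_self (a := p) (l := T)))
    have h2 : y ≠ p.2 := fun hy => h (hy ▸ mem_pts_snd (mem_cons_self (a := p) (l := T)))
    have h3 : y ∉ pts T := by
      intro hy
      apply h
      simp only [pts, mem_append, mem_map] at hy ⊢
      rcases hy with ⟨q, hq, rfl⟩ | ⟨q, hq, rfl⟩
      · exact Or.inl ⟨q, mem_cons_of_mem _ hq, rfl⟩
      · exact Or.inr ⟨q, mem_cons_of_mem _ hq, rfl⟩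
    rw [pperm_cons, Equiv.Perm.mul_apply, ih h3, Equiv.swap_apply_of_ne_of_ne h1 h2]

lemma good_cons {p : ℕ × ℕ} {T : List (ℕ × ℕ)} (h : (pts (p :: T)).Nodup) :
    (pts T).Nodup ∧ p.1 ∉ pts T ∧ p.2 ∉ pts T ∧ p.1 ≠ p.2 := by
  have hshape : pts (p :: T) = (p.1 :: T.map Prod.fst) ++ (p.2 :: T.map Prod.snd) := by
    simp [pts]
  rw [hshape, nodup_append] at h
  obtain ⟨h1, h2, h3⟩ := h
  rw [nodup_cons] at h1 h2
  constructor
  · rw [pts, nodup_append]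
    exact ⟨h1.2, h2.2, fun a ha b hb => h3 a (mem_cons_of_mem _ ha) b (mem_cons_of_mem _ hb)⟩
  refine ⟨?_, ?_, ?_⟩
  · intro hx
    rcases (mem_append.mp hx) with hx' | hx'
    · exact h1.1 hx'
    · exact h3 _ mem_cons_self _ (mem_cons_of_mem _ hx') rfl
  · intro hx
    rcases (mem_append.mp hx) with hx' | hx'
    · exact h3 _ (mem_cons_of_mem _ hx') _ mem_cons_self rfl
    · exact h2.1 hx'
  · intro hx
    exact h3 _ mem_cons_self _ mem_cons_self hx

lemma pperm_pair {L : List (ℕ × ℕ)} (hL : (pts L).Nodup) {p : ℕ × ℕ} (hp : p ∈ L) :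
    pperm L p.1 = p.2 ∧ pperm L p.2 = p.1 := by
  induction L with
  | nil => simp at hp
  | cons q T ih =>
    obtain ⟨hT, hq1, hq2, hne⟩ := good_cons hL
    rw [pperm_cons]
    rcases mem_cons.mp hp with rfl | hp'
    · rw [Equiv.Perm.mul_apply, Equiv.Perm.mul_apply,
        pperm_apply_of_not_mem _ hq1, pperm_apply_of_not_mem _ hq2]
      exact ⟨Equiv.swap_apply_left _ _, Equiv.swap_apply_right _ _⟩
    · obtain ⟨ih1, ih2⟩ := ih hT hp'
      have hp1 : p.1 ∈ pts T := mem_pts_fst hp'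
      have hp2 : p.2 ∈ pts T := mem_pts_snd hp'
      constructor
      · rw [Equiv.Perm.mul_apply, ih1,
          Equiv.swap_apply_of_ne_of_ne (fun h => hq1 (by rw [← h]; exact hp2))
            (fun h => hq2 (by rw [← h]; exact hp2))]
      · rw [Equiv.Perm.mul_apply, ih2,
          Equiv.swap_apply_of_ne_of_ne (fun h => hq1 (by rw [← h]; exact hp1))
            (fun h => hq2 (by rw [← h]; exact hp1))]

lemma pperm_sq {L : List (ℕ × ℕ)} (hL : (pts L).Nodup) : pperm L * pperm L = 1 := by
  ext y
  by_cases hy : y ∈ pts L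
  · obtain ⟨p, hp, hy'⟩ := exists_of_mem_pts hy
    obtain ⟨h1, h2⟩ := pperm_pair hL hp
    rcases hy' with rfl | rfl
    · simp [Equiv.Perm.mul_apply, h1, h2]
    · simp [Equiv.Perm.mul_apply, h1, h2]
  · simp [Equiv.Perm.mul_apply, pperm_apply_of_not_mem _ hy]

lemma pperm_conj (e : Equiv.Perm ℕ) (L : List (ℕ × ℕ)) :
    e * pperm L * e⁻¹ = pperm (L.map fun p => (e p.1, e p.2)) := by
  induction L with
  | nil => simp [pperm]
  | cons p T ih =>
    simp only [List.map_cons, pperm_cons]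
    rw [← ih, Equiv.swap_apply_apply]
    group

lemma pperm_commute {L M : List (ℕ × ℕ)} (h : ∀ x ∈ pts L, x ∉ pts M) :
    Commute (pperm L) (pperm M) := by
  apply Equiv.Perm.Disjoint.commute
  intro y
  by_cases hy : y ∈ pts L
  · exact Or.inr (pperm_apply_of_not_mem _ (h y hy))
  · exact Or.inl (pperm_apply_of_not_mem _ hy)

lemma pts_append_perm (X Y : List (ℕ × ℕ)) : (pts (X ++ Y)).Perm (pts X ++ pts Y) := by
  have key : ∀ (a b c d : List ℕ), ((a ++ b) ++ (c ++ d)).Perm ((a ++ c) ++ (b ++ d)) := by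
    intro a b c d
    simp only [List.append_assoc]
    apply List.Perm.append_left a
    calc b ++ (c ++ d) ~ (b ++ c) ++ d := by rw [List.append_assoc]
      _ ~ (c ++ b) ++ d := (List.perm_append_comm).append_right d
      _ ~ c ++ (b ++ d) := by rw [List.append_assoc]
  simpa [pts] using key (X.map Prod.fst) (Y.map Prod.fst) (X.map Prod.snd) (Y.map Prod.snd)

lemma nodup_pts_append {X Y : List (ℕ × ℕ)} (hX : (pts X).Nodup) (hY : (pts Y).Nodup)
    (hdisj : ∀ x ∈ pts X, x ∉ pts Y) : (pts (X ++ Y)).Nodup := by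
  rw [(pts_append_perm X Y).nodup_iff, nodup_append]
  exact ⟨hX, hY, fun a ha b hb hab => hdisj a ha (hab ▸ hb)⟩

lemma mem_pts_append {X Y : List (ℕ × ℕ)} {x : ℕ} (hx : x ∈ pts (X ++ Y)) :
    x ∈ pts X ∨ x ∈ pts Y :=
  mem_append.mp ((pts_append_perm X Y).mem_iff.mp hx)

lemma pts_getElem_fst (L : List (ℕ × ℕ)) (j : ℕ) (hj : j < L.length) :
    (pts L)[j]'(by rw [pts_length]; omega) = L[j].1 := by
  simp only [pts]
  rw [List.getElem_append_left (by simpa using hj)]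
  simp

lemma pts_getElem_snd (L : List (ℕ × ℕ)) (j : ℕ) (hj : j < L.length) :
    (pts L)[L.length + j]'(by rw [pts_length]; omega) = L[j].2 := by
  simp only [pts]
  rw [List.getElem_append_right (by simp)]
  simp

lemma getElem_idx_congr (l : List ℕ) {i j : ℕ} (h : i = j) (hi : i < l.length) :
    l[i] = l[j]'(h ▸ hi) := by subst h; rfl

/-- Given two nodup lists of the same length, there is a permutation of `ℕ` matching them up
pointwise. -/
lemma exists_perm_map (l₁ l₂ : List ℕ) (h₁ : l₁.Nodup) (h₂ : l₂.Nodup)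
    (hlen : l₁.length = l₂.length) :
    ∃ e : Equiv.Perm ℕ, ∀ i : ℕ, ∀ hi : i < l₁.length,
      e (l₁[i]) = l₂[i]'(hlen ▸ hi) := by
  classical
  set s₁ : Set ℕ := {x | x ∈ l₁} with hs₁
  set s₂ : Set ℕ := {x | x ∈ l₂} with hs₂
  haveI hinf₁ : Infinite ↥(s₁ᶜ) := (Set.Finite.infinite_compl (l₁.finite_toSet)).to_subtype
  haveI hinf₂ : Infinite ↥(s₂ᶜ) := (Set.Finite.infinite_compl (l₂.finite_toSet)).to_subtype
  obtain ⟨d₁⟩ := nonempty_denumerable ↥(s₁ᶜ)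
  obtain ⟨d₂⟩ := nonempty_denumerable ↥(s₂ᶜ)
  let q₁ : Fin l₁.length ≃ ↥s₁ := List.Nodup.getEquiv l₁ h₁
  let q₂ : Fin l₂.length ≃ ↥s₂ := List.Nodup.getEquiv l₂ h₂
  let F : ↥s₁ ≃ ↥s₂ := q₁.symm.trans ((finCongr hlen).trans q₂)
  letI : Denumerable ↥(s₁ᶜ) := d₁
  letI : Denumerable ↥(s₂ᶜ) := d₂
  let G : ↥(s₁ᶜ) ≃ ↥(s₂ᶜ) := (Denumerable.eqv _).trans (Denumerable.eqv _).symm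
  refine ⟨(Equiv.Set.sumCompl s₁).symm.trans ((Equiv.sumCongr F G).trans
    (Equiv.Set.sumCompl s₂)), ?_⟩
  intro i hi
  have hmem : l₁[i] ∈ s₁ := by
    simp only [hs₁, Set.mem_setOf_eq]
    exact List.getElem_mem hi
  simp only [Equiv.trans_apply]
  rw [Equiv.Set.sumCompl_symm_apply_of_mem hmem]
  simp only [Equiv.sumCongr_apply, Sum.map_inl, Equiv.Set.sumCompl_apply_inl]
  have h1 : q₁.symm ⟨l₁[i], hmem⟩ = ⟨i, hi⟩ := by
    rw [Equiv.symm_apply_eq]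
    exact Subtype.ext rfl
  show ((F ⟨l₁[i], hmem⟩ : ↥s₂) : ℕ) = _
  simp only [F, Equiv.trans_apply, h1]
  rfl

set_option maxHeartbeats 1000000 in
lemma isConj_pperm {L₁ L₂ : List (ℕ × ℕ)} (g₁ : (pts L₁).Nodup) (g₂ : (pts L₂).Nodup)
    (h : L₁.length = L₂.length) : IsConj (pperm L₁) (pperm L₂) := by
  have hlen : (pts L₁).length = (pts L₂).length := by simp [pts_length, h]
  obtain ⟨e, he⟩ := exists_perm_map _ _ g₁ g₂ hlen
  rw [isConj_iff]
  refine ⟨e, ?_⟩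
  rw [pperm_conj]
  congr 1
  apply List.ext_getElem (by simp [h])
  intro j hj hj'
  simp only [List.length_map] at hj
  have hj₂ : j < L₂.length := h ▸ hj
  have e1 := he j (by rw [pts_length]; omega)
  have e2 := he (L₁.length + j) (by rw [pts_length]; omega)
  rw [pts_getElem_fst L₁ j hj] at e1
  rw [pts_getElem_snd L₁ j hj] at e2
  have hfst2 : (pts L₂)[j]'(by rw [pts_length]; omega) = L₂[j].1 := pts_getElem_fst L₂ j hj₂
  have hsnd2 : (pts L₂)[L₁.length + j]'(by rw [pts_length]; omega) = L₂[j].2 := by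
    have := pts_getElem_snd L₂ j hj₂
    simpa [h] using this
  rw [hfst2] at e1
  rw [hsnd2] at e2
  simp only [List.getElem_map]
  exact Prod.ext e1 e2

/-- The list of "reversal" pairs of a list. -/
def blist (l : List ℕ) : List (ℕ × ℕ) := (l.zip l.reverse).take (l.length / 2)

lemma blist_length (l : List ℕ) : (blist l).length = l.length / 2 := by
  simp only [blist, List.length_take, List.length_zip, List.length_reverse]
  omega

lemma blist_getElem (l : List ℕ) (j : ℕ) (hj : j < l.length / 2) :
    (blist l)[j]'(by rw [blist_length]; exact hj) =
      (l[j]'(by omega), l[l.length - 1 - j]'(by omega)) := by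
  simp only [blist, List.getElem_take, List.getElem_zip, List.getElem_reverse]

lemma take_reverse' (l : List ℕ) (m : ℕ) :
    l.reverse.take m = (l.drop (l.length - m)).reverse := by
  have := List.reverse_take (l := l.reverse) (i := m)
  rw [List.reverse_reverse, List.length_reverse] at this
  rw [← List.reverse_reverse (List.take m l.reverse), this]

lemma pts_blist (l : List ℕ) :
    pts (blist l) = l.take (l.length / 2) ++ (l.drop (l.length - l.length / 2)).reverse := by
  rw [pts, blist]
  congr 1
  · rw [List.map_take, List.map_fst_zip (by simp)]
  · rw [List.map_take, List.map_snd_zip (by simp), take_reverse']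

lemma mem_of_mem_pts_blist {l : List ℕ} {x : ℕ} (hx : x ∈ pts (blist l)) : x ∈ l := by
  rw [pts_blist] at hx
  rcases mem_append.mp hx with hx' | hx'
  · exact List.take_subset _ _ hx'
  · exact List.drop_subset _ _ (List.mem_reverse.mp hx')

lemma nodup_pts_blist {l : List ℕ} (h : l.Nodup) : (pts (blist l)).Nodup := by
  rw [pts_blist, nodup_append]
  have hm : l.length / 2 ≤ l.length - l.length / 2 := by omega
  have hsplit := List.take_append_drop (l.length - l.length / 2) l
  have hnd : (l.take (l.length - l.length / 2)).Disjoint (l.drop (l.length - l.length / 2)) := by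
    apply List.disjoint_of_nodup_append
    rw [hsplit]; exact h
  refine ⟨h.sublist (List.take_sublist _ _), (List.nodup_reverse).mpr (h.sublist (List.drop_sublist _ _)), ?_⟩
  rintro a ha _ ha' rfl
  rw [List.mem_reverse] at ha'
  have : a ∈ l.take (l.length - l.length / 2) := by
    have : l.take (l.length / 2) = (l.take (l.length - l.length / 2)).take (l.length / 2) := by
      rw [List.take_take, min_eq_left hm]
    rw [this] at ha
    exact List.take_subset _ _ ha
  exact hnd this ha'

lemma not_mem_take {l : List ℕ} (h : l.Nodup) {j m : ℕ} (hj : j < l.length) (hm : m ≤ j) :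
    l[j] ∉ l.take m := by
  intro hmem
  obtain ⟨i, hi, hieq⟩ := List.getElem_of_mem hmem
  rw [List.getElem_take] at hieq
  have hi' : i < m ∧ i < l.length := by simpa using hi
  have := (h.getElem_inj_iff).mp hieq
  omega

lemma not_mem_drop {l : List ℕ} (h : l.Nodup) {j m : ℕ} (hj : j < l.length) (hm : j < m) :
    l[j] ∉ l.drop m := by
  intro hmem
  obtain ⟨i, hi, hieq⟩ := List.getElem_of_mem hmem
  rw [List.getElem_drop] at hieq
  have := (h.getElem_inj_iff).mp hieq
  omega

lemma pperm_blist_apply {l : List ℕ} (h : l.Nodup) (j : ℕ) (hj : j < l.length) :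
    pperm (blist l) (l[j]) = l[l.length - 1 - j]'(by omega) := by
  set n := l.length with hn
  rcases lt_or_ge j (n / 2) with hc | hc
  · have hp : ((l[j]'(by omega), l[n - 1 - j]'(by omega)) : ℕ × ℕ) ∈ blist l := by
      rw [← blist_getElem l j hc]
      exact List.getElem_mem _
    exact (pperm_pair (nodup_pts_blist h) hp).1
  · rcases lt_or_ge (n - 1 - j) (n / 2) with hc2 | hc2
    · have hmem : (blist l)[n - 1 - j]'(by rw [blist_length]; exact hc2) ∈ blist l :=
        List.getElem_mem _
      rw [blist_getElem l (n - 1 - j) hc2] at hmem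
      simp only [show l.length - 1 - (n - 1 - j) = j from by omega] at hmem
      exact (pperm_pair (nodup_pts_blist h) hmem).2
    · have hodd : j = n - 1 - j := by omega
      have hnm : l[j] ∉ pts (blist l) := by
        rw [pts_blist]
        intro hmem
        rcases mem_append.mp hmem with hx | hx
        · exact not_mem_take h hj (by omega) hx
        · rw [List.mem_reverse] at hx
          exact not_mem_drop h hj (by omega) hx
      rw [pperm_apply_of_not_mem _ hnm]
      exact getElem_idx_congr l (by omega) hj

lemma formPerm_eq_pperm {l : List ℕ} (h : l.Nodup) :
    l.formPerm = pperm (blist l.tail) * pperm (blist l) := by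
  have htl : l.tail.Nodup := h.sublist (List.tail_sublist l)
  ext y
  by_cases hy : y ∈ l
  · obtain ⟨j, hj, rfl⟩ := List.getElem_of_mem hy
    rw [List.formPerm_apply_getElem _ h _ hj, Equiv.Perm.mul_apply, pperm_blist_apply h j hj]
    set n := l.length with hn
    rcases Nat.lt_or_ge j (n - 1) with hc | hc
    · have h1 : l[n - 1 - j]'(by omega) = l.tail[n - 2 - j]'(by simp; omega) := by
        rw [List.getElem_tail]
        exact getElem_idx_congr l (by omega) (by omega)
      rw [h1, pperm_blist_apply htl (n - 2 - j) (by simp; omega)]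
      rw [List.getElem_tail]
      have hmod : (j + 1) % n = j + 1 := Nat.mod_eq_of_lt (by omega)
      have hidx : l.tail.length - 1 - (n - 2 - j) + 1 = (j + 1) % n := by
        rw [hmod]
        simp only [List.length_tail, ← hn]
        omega
      exact (getElem_idx_congr l hidx (by simp only [List.length_tail, ← hn]; omega)).symm
    · have hj' : j = n - 1 := by omega
      have h0 : l[n - 1 - j]'(by omega) = l[0]'(by omega) := by congr 1; omega
      have hnot : l[0]'(by omega) ∉ pts (blist l.tail) := by
        intro hmem
        have hx := mem_of_mem_pts_blist hmem
        obtain ⟨i, hi, hieq⟩ := List.getElem_of_mem hx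
        rw [List.getElem_tail] at hieq
        have := (h.getElem_inj_iff).mp hieq
        omega
      rw [h0, pperm_apply_of_not_mem _ hnot]
      have hidx : (j + 1) % n = 0 := by
        rw [show j + 1 = n from by omega, Nat.mod_self]
      exact getElem_idx_congr l hidx (by simp only [← hn]; omega)
  · rw [List.formPerm_apply_of_notMem hy, Equiv.Perm.mul_apply,
      pperm_apply_of_not_mem _ (fun hc => hy (mem_of_mem_pts_blist hc)),
      pperm_apply_of_not_mem _
        (fun hc => hy (List.mem_of_mem_tail (mem_of_mem_pts_blist hc)))]


/-- Every finitely supported permutation of `ℕ` is a product of two "pair-list" involutions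
supported inside its support. -/
lemma decomp (N : ℕ) : ∀ (σ : Equiv.Perm ℕ), {x | σ x ≠ x}.Finite →
    {x | σ x ≠ x}.ncard ≤ N →
    ∃ L₁ L₂ : List (ℕ × ℕ), (pts L₁).Nodup ∧ (pts L₂).Nodup ∧
      (∀ z ∈ pts L₁, σ z ≠ z) ∧ (∀ z ∈ pts L₂, σ z ≠ z) ∧ σ = pperm L₁ * pperm L₂ := by
  induction N with
  | zero =>
    intro σ hfin hcard
    have hemp : {x | σ x ≠ x} = ∅ := by
      rw [← Set.ncard_eq_zero hfin]; omega
    have hσ : σ = 1 := by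
      ext y
      have : y ∉ ({x | σ x ≠ x} : Set ℕ) := by rw [hemp]; exact Set.notMem_empty y
      simpa using this
    exact ⟨[], [], by simp [pts], by simp [pts], by simp [pts], by simp [pts],
      by rw [hσ, pperm_nil, one_mul]⟩
  | succ N IH =>
    intro σ hfin hcard
    by_cases hσ1 : σ = 1
    · exact ⟨[], [], by simp [pts], by simp [pts], by simp [pts], by simp [pts],
        by rw [hσ1, pperm_nil, one_mul]⟩
    obtain ⟨x, hx⟩ : ∃ x, σ x ≠ x := by
      by_contra hcon
      push_neg at hcon
      exact hσ1 (Equiv.ext fun y => by simpa using hcon y)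
    have happ : ∀ i : ℕ, σ ((σ ^ i) x) = (σ ^ (i + 1)) x := by
      intro i
      rw [pow_succ']
      rfl
    have hstep : ∀ i : ℕ, σ ((σ ^ i) x) = (σ ^ i) (σ x) := by
      intro i
      rw [happ i, pow_succ]
      rfl
    have hkey : ∀ i j : ℕ, i < j → (σ ^ i) x = (σ ^ j) x → (σ ^ (j - i)) x = x := by
      intro i j hij hEq
      apply (σ ^ i).injective
      rw [← Equiv.Perm.mul_apply, ← pow_add]
      rw [show i + (j - i) = j from by omega, ← hEq]
    have hper : ∃ m, 0 < m ∧ (σ ^ m) x = x := by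
      by_contra hcon
      push_neg at hcon
      have hinj : Function.Injective (fun i : ℕ => (σ ^ i) x) := by
        intro i j hij
        simp only at hij
        rcases lt_trichotomy i j with h | h | h
        · exact absurd (hkey i j h hij) (hcon _ (by omega))
        · exact h
        · exact absurd (hkey j i h hij.symm) (hcon _ (by omega))
      have hrange : Set.range (fun i : ℕ => (σ ^ i) x) ⊆ {y | σ y ≠ y} := by
        rintro _ ⟨i, rfl⟩
        intro hEq
        apply hx
        have := hstep i
        rw [hEq] at this
        exact ((σ ^ i).injective this.symm)
      exact (hfin.subset hrange).not_infinite (Set.infinite_range_of_injective hinj)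
    obtain ⟨m, hm0, hmx⟩ := hper
    set n := Function.minimalPeriod (⇑σ) x with hndef
    have hmper : Function.IsPeriodicPt (⇑σ) m x := by
      show (⇑σ)^[m] x = x
      rw [Equiv.Perm.iterate_eq_pow]
      exact hmx
    have hn0 : 0 < n := hmper.minimalPeriod_pos hm0
    have hnper : (σ ^ n) x = x := by
      have h := Function.isPeriodicPt_minimalPeriod (⇑σ) x
      have h2 : (⇑σ)^[n] x = x := h
      rwa [Equiv.Perm.iterate_eq_pow] at h2
    have hn1 : n ≠ 1 := by
      intro h
      apply hx
      rw [h, pow_one] at hnper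
      exact hnper
    have hn2 : 2 ≤ n := by omega
    set l : List ℕ := (List.range n).map (fun i => (σ ^ i) x) with hl
    have hlen : l.length = n := by simp [hl]
    have hget : ∀ (i : ℕ) (hi : i < l.length), l[i] = (σ ^ i) x := by
      intro i hi
      simp [hl]
    have hmeml : ∀ y, y ∈ l ↔ ∃ i, i < n ∧ (σ ^ i) x = y := by
      intro y
      simp [hl, List.mem_map, List.mem_range]
    have hnodup : l.Nodup := by
      rw [hl]
      apply List.Nodup.map_on _ (List.nodup_range (n := n))
      intro i hi j hj hEq
      rw [List.mem_range] at hi hj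
      rcases lt_trichotomy i j with h | h | h
      · exfalso
        have h2 := hkey i j h hEq
        have h3 : Function.IsPeriodicPt (⇑σ) (j - i) x := by
          show (⇑σ)^[j - i] x = x
          rw [Equiv.Perm.iterate_eq_pow]; exact h2
        have := h3.minimalPeriod_le (by omega)
        omega
      · exact h
      · exfalso
        have h2 := hkey j i h hEq.symm
        have h3 : Function.IsPeriodicPt (⇑σ) (i - j) x := by
          show (⇑σ)^[i - j] x = x
          rw [Equiv.Perm.iterate_eq_pow]; exact h2
        have := h3.minimalPeriod_le (by omega)
        omega
    have hxl : x ∈ l := by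
      rw [hmeml]
      exact ⟨0, by omega, by simp⟩
    have hmove : ∀ y ∈ l, σ y ≠ y := by
      intro y hy
      obtain ⟨i, hi, rfl⟩ := (hmeml y).mp hy
      intro hEq
      apply hx
      have := hstep i
      rw [hEq] at this
      exact (σ ^ i).injective this.symm
    have hclosed : ∀ y ∈ l, σ y ∈ l := by
      intro y hy
      obtain ⟨i, hi, rfl⟩ := (hmeml y).mp hy
      rw [happ i, hmeml]
      rcases Nat.lt_or_ge (i + 1) n with h | h
      · exact ⟨i + 1, h, rfl⟩
      · have hin : i + 1 = n := by omega
        refine ⟨0, by omega, ?_⟩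
        rw [pow_zero, hin, hnper]
        simp
    have hclosedinv : ∀ y, σ y ∈ l → y ∈ l := by
      intro y hy
      obtain ⟨i, hi, hEq⟩ := (hmeml (σ y)).mp hy
      rcases Nat.eq_zero_or_pos i with rfl | hipos
      · rw [pow_zero] at hEq
        have : σ y = (σ ^ n) x := by rw [hnper]; simpa using hEq.symm
        rw [show n = (n - 1) + 1 from by omega, ← happ (n - 1)] at this
        have := σ.injective this
        rw [hmeml]
        exact ⟨n - 1, by omega, this.symm⟩
      · have : σ y = σ ((σ ^ (i - 1)) x) := by
          rw [happ (i - 1), show i - 1 + 1 = i from by omega]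
          exact hEq.symm
        have := σ.injective this
        rw [hmeml]
        exact ⟨i - 1, by omega, this.symm⟩
    set c := l.formPerm with hc
    have hcyc : ∀ y ∈ l, c y = σ y := by
      intro y hy
      obtain ⟨j, hj, rfl⟩ := List.getElem_of_mem hy
      rw [List.formPerm_apply_getElem _ hnodup _ hj]
      have hgj := hget j hj
      have hgm := hget ((j + 1) % l.length) (Nat.mod_lt _ (by omega))
      rw [hgj, hgm, happ j]
      rcases Nat.lt_or_ge (j + 1) l.length with h | h
      · rw [Nat.mod_eq_of_lt h]
      · have hjn : j + 1 = l.length := by omega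
        rw [hjn, Nat.mod_self, pow_zero, hlen, hnper]
        simp
    have hcfix : ∀ y ∉ l, c y = y := fun y hy => List.formPerm_apply_of_notMem hy
    set τ := c⁻¹ * σ with hτ
    have hτl : ∀ y ∈ l, τ y = y := by
      intro y hy
      show c⁻¹ (σ y) = y
      rw [← hcyc y hy]
      exact c.symm_apply_apply y
    have hτnl : ∀ y, y ∉ l → τ y = σ y := by
      intro y hy
      show c⁻¹ (σ y) = σ y
      have hσy : σ y ∉ l := fun hc' => hy (hclosedinv y hc')
      have h1 := hcfix (σ y) hσy
      calc c⁻¹ (σ y) = c⁻¹ (c (σ y)) := by rw [h1]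
        _ = σ y := c.symm_apply_apply (σ y)
    have hτsupp : {y | τ y ≠ y} ⊆ {y | σ y ≠ y} \ {x} := by
      intro y hy
      simp only [Set.mem_setOf_eq] at hy
      by_cases hyl : y ∈ l
      · exact absurd (hτl y hyl) hy
      refine ⟨?_, ?_⟩
      · intro hEq
        exact hy (by rw [hτnl y hyl]; exact hEq)
      · simp only [Set.mem_singleton_iff]
        exact fun h => hyl (h ▸ hxl)
    have hτfin : {y | τ y ≠ y}.Finite :=
      hfin.subset (hτsupp.trans Set.diff_subset)
    have hτcard : {y | τ y ≠ y}.ncard ≤ N := by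
      have h1 : {y | τ y ≠ y}.ncard ≤ ({y | σ y ≠ y} \ {x}).ncard :=
        Set.ncard_le_ncard hτsupp (hfin.diff)
      have h2 : ({y | σ y ≠ y} \ {x}).ncard < {y | σ y ≠ y}.ncard :=
        Set.ncard_diff_singleton_lt_of_mem hx hfin
      omega
    obtain ⟨B₁, B₂, g1, g2, s1, s2, hτeq⟩ := IH τ hτfin hτcard
    have hσeq : σ = c * τ := by rw [hτ]; group
    have hrev := formPerm_eq_pperm hnodup
    have hAsub : ∀ z ∈ pts (blist l.tail), z ∈ l :=
      fun z hz => List.mem_of_mem_tail (mem_of_mem_pts_blist hz)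
    have hBlsub : ∀ z ∈ pts (blist l), z ∈ l := fun z hz => mem_of_mem_pts_blist hz
    have hB₁l : ∀ z ∈ pts B₁, z ∉ l := fun z hz hzl => (s1 z hz) (hτl z hzl)
    have hB₂l : ∀ z ∈ pts B₂, z ∉ l := fun z hz hzl => (s2 z hz) (hτl z hzl)
    have htl : l.tail.Nodup := hnodup.sublist (List.tail_sublist l)
    have hτσ : ∀ z, τ z ≠ z → σ z ≠ z := fun z hz => (hτsupp hz).1
    refine ⟨blist l.tail ++ B₁, blist l ++ B₂, ?_, ?_, ?_, ?_, ?_⟩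
    · exact nodup_pts_append (nodup_pts_blist htl) g1
        (fun z hz hz' => (hB₁l z hz') (hAsub z hz))
    · exact nodup_pts_append (nodup_pts_blist hnodup) g2
        (fun z hz hz' => (hB₂l z hz') (hBlsub z hz))
    · intro z hz
      rcases mem_pts_append hz with hz' | hz'
      · exact hmove z (hAsub z hz')
      · exact hτσ z (s1 z hz')
    · intro z hz
      rcases mem_pts_append hz with hz' | hz'
      · exact hmove z (hBlsub z hz')
      · exact hτσ z (s2 z hz')
    · rw [pperm_append, pperm_append, hσeq, hc, hrev, hτeq]
      have hcomm : Commute (pperm (blist l)) (pperm B₁) :=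
        pperm_commute (fun z hz hz' => (hB₁l z hz') (hBlsub z hz))
      have h3 : pperm (blist l) * (pperm B₁ * pperm B₂) =
          pperm B₁ * (pperm (blist l) * pperm B₂) := by
        rw [← mul_assoc, hcomm.eq, mul_assoc]
      rw [mul_assoc, h3, ← mul_assoc]

/-- Padding pair lists. -/
def padL (s m : ℕ) : List (ℕ × ℕ) := (List.range m).map fun i => (s + 2 * i, s + 2 * i + 1)

lemma length_padL (s m : ℕ) : (padL s m).length = m := by simp [padL]

lemma pts_padL (s m : ℕ) : pts (padL s m) =
    ((List.range m).map fun i => s + 2 * i) ++ ((List.range m).map fun i => s + 2 * i + 1) := by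
  simp [pts, padL, List.map_map, Function.comp_def]

lemma mem_pts_padL {s m z : ℕ} (hz : z ∈ pts (padL s m)) : s ≤ z ∧ z < s + 2 * m := by
  rw [pts_padL] at hz
  rcases List.mem_append.mp hz with hz' | hz' <;>
  · simp only [List.mem_map, List.mem_range] at hz'
    obtain ⟨i, hi, rfl⟩ := hz'
    omega

lemma nodup_pts_padL (s m : ℕ) : (pts (padL s m)).Nodup := by
  rw [pts_padL, List.nodup_append]
  refine ⟨List.Nodup.map (fun i j h => by omega) (List.nodup_range (n := m)),
    List.Nodup.map (fun i j h => by omega) (List.nodup_range (n := m)), ?_⟩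
  intro z hz w hz' hzw
  simp only [List.mem_map, List.mem_range] at hz hz'
  obtain ⟨i, hi, rfl⟩ := hz
  obtain ⟨j, hj, hEq⟩ := hz'
  omega

end IotaAux

/-- `iotaNat k` is the permutation `(1,2)(3,4)⋯(2k−1,2k)` of `ℕ`. -/
def iotaNat (k : ℕ) : Equiv.Perm ℕ :=
  ((List.range k).map fun i => Equiv.swap (2 * i) (2 * i + 1)).prod

lemma IotaAux.iotaNat_eq (k : ℕ) : iotaNat k = IotaAux.pperm (IotaAux.padL 0 k) := by
  simp [iotaNat, IotaAux.pperm, IotaAux.padL, List.map_map, Function.comp_def]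

open IotaAux in
/-- Lemma 8.13: if `σ ≠ 1` is a finitely supported permutation of `ℕ`, then there is a
positive `k ≤ ν(σ)` such that `σ` is a product of three conjugates of `ι_k`. -/
theorem perm_eq_prod_three_conjugates_of_iota (σ : Equiv.Perm ℕ) (hσ : σ ≠ 1)
    (hfin : {x : ℕ | σ x ≠ x}.Finite) :
    ∃ k : ℕ, 0 < k ∧ k ≤ {x : ℕ | σ x ≠ x}.ncard ∧
      ∃ σ₁ σ₂ σ₃ : Equiv.Perm ℕ,
        IsConj (iotaNat k) σ₁ ∧ IsConj (iotaNat k) σ₂ ∧ IsConj (iotaNat k) σ₃ ∧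
        σ = σ₁ * σ₂ * σ₃ := by
  classical
  obtain ⟨L₁, L₂, g1, g2, s1, s2, hdecomp⟩ :=
    IotaAux.decomp ({x : ℕ | σ x ≠ x}.ncard) σ hfin le_rfl
  set a := L₁.length with ha
  set b := L₂.length with hb
  refine ⟨a + b, ?_, ?_, ?_⟩
  · -- positivity
    rcases Nat.eq_zero_or_pos (a + b) with hk | hk
    · exfalso
      have ha0 : L₁ = [] := List.length_eq_zero_iff.mp (by omega)
      have hb0 : L₂ = [] := List.length_eq_zero_iff.mp (by omega)
      apply hσ
      rw [hdecomp, ha0, hb0, pperm_nil, one_mul]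
    · exact hk
  · -- cardinality bound
    have hcard : ∀ (L : List (ℕ × ℕ)), (pts L).Nodup → (∀ z ∈ pts L, σ z ≠ z) →
        L.length + L.length ≤ {x : ℕ | σ x ≠ x}.ncard := by
      intro L gL sL
      have h1 : ↑(pts L).toFinset ⊆ {x : ℕ | σ x ≠ x} := by
        intro z hz
        simp only [Finset.coe_sort_coe, List.coe_toFinset, Set.mem_setOf_eq,
          List.mem_toFinset] at hz ⊢
        exact sL z hz
      have h2 := Set.ncard_le_ncard h1 hfin
      rwa [Set.ncard_coe_finset, List.toFinset_card_of_nodup gL, pts_length] at h2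
    have hc1 := hcard L₁ g1 s1
    have hc2 := hcard L₂ g2 s2
    omega
  · -- the three conjugates
    set M := ((pts L₁ ++ pts L₂).sum + 1 : ℕ) with hM
    have hMgt : ∀ z ∈ pts L₁ ++ pts L₂, z < M := by
      intro z hz
      have := List.single_le_sum (l := pts L₁ ++ pts L₂) (fun _ _ => Nat.zero_le _) z hz
      omega
    have hMgt1 : ∀ z ∈ pts L₁, z < M := fun z hz => hMgt z (List.mem_append_left _ hz)
    have hMgt2 : ∀ z ∈ pts L₂, z < M := fun z hz => hMgt z (List.mem_append_right _ hz)
    set U := padL M b with hU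
    set W := padL (M + 2 * b) a with hW
    have hUb : ∀ z ∈ pts U, M ≤ z ∧ z < M + 2 * b := fun z hz => mem_pts_padL hz
    have hWb : ∀ z ∈ pts W, M + 2 * b ≤ z ∧ z < M + 2 * b + 2 * a := fun z hz => mem_pts_padL hz
    have gU : (pts U).Nodup := nodup_pts_padL _ _
    have gW : (pts W).Nodup := nodup_pts_padL _ _
    have g1U : (pts (L₁ ++ U)).Nodup :=
      nodup_pts_append g1 gU (fun z hz hz' => by have := hMgt1 z hz; have := hUb z hz'; omega)
    have g2W : (pts (L₂ ++ W)).Nodup :=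
      nodup_pts_append g2 gW (fun z hz hz' => by have := hMgt2 z hz; have := hWb z hz'; omega)
    have gWU : (pts (W ++ U)).Nodup :=
      nodup_pts_append gW gU (fun z hz hz' => by have := hWb z hz; have := hUb z hz'; omega)
    refine ⟨pperm (L₁ ++ U), pperm (L₂ ++ W), pperm (W ++ U), ?_, ?_, ?_, ?_⟩
    · rw [IotaAux.iotaNat_eq]
      exact isConj_pperm (nodup_pts_padL 0 (a + b)) g1U
        (by simp [length_padL, List.length_append, hU, ← ha, ← hb] <;> omega)
    · rw [IotaAux.iotaNat_eq]
      exact isConj_pperm (nodup_pts_padL 0 (a + b)) g2W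
        (by simp [length_padL, List.length_append, hW, ← ha, ← hb] <;> omega)
    · rw [IotaAux.iotaNat_eq]
      exact isConj_pperm (nodup_pts_padL 0 (a + b)) gWU
        (by simp [length_padL, List.length_append, hU, hW, ← ha, ← hb] <;> omega)
    · rw [pperm_append, pperm_append, pperm_append]
      have hU2 := pperm_sq gU
      have hW2 := pperm_sq gW
      have hUβ : Commute (pperm U) (pperm L₂) :=
        pperm_commute (fun z hz hz' => by have := hUb z hz; have := hMgt2 z hz'; omega)
      have e1 : (pperm L₁ * pperm U) * (pperm L₂ * pperm W) * (pperm W * pperm U) =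
          pperm L₁ * pperm U * pperm L₂ * (pperm W * pperm W) * pperm U := by
        group
      rw [e1, hW2, mul_one, mul_assoc (pperm L₁) (pperm U) (pperm L₂), hUβ.eq]
      have e2 : pperm L₁ * (pperm L₂ * pperm U) * pperm U =
          (pperm L₁ * pperm L₂) * (pperm U * pperm U) := by group
      rw [e2, hU2, mul_one, ← hdecomp]
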